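/- Suppose there exist unit vectors U ∈ H₁(1) and W ∈ H₁(−1) such that for each a ∈ {2, 3}, ⟨φ_a Z, Y⟩ = 0 for all Z ∈ H₁(1) orthogonal to U and all Y ∈ H₁(−1) orthogonal to W. Then dim H₁(1) = dim H₁(−1) = 2; more precisely H₁(1) = span{U, φU} and H₁(−1) = span{W, φW}. -/

import Mathlib

open RealInnerProductSpace

/-- An almost contact metric structure `(φ, ξ, η)` together with an almost contact metric
3-structure `(φ_a, ξ_a, η_a)`, `a ∈ {1,2,3}` (indices mod 3), on a real inner product space `V`,
modelling the structures induced on the tangent space of a real hypersurface in the complex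
two-plane Grassmannian `G₂(ℂ^{m+2})` by the Kaehler structure `J` and the quaternionic Kaehler
structure `𝔍`.  Here `η(X) = ⟪ξ, X⟫` and `η_a(X) = ⟪ξ_a, X⟫` are written out via the inner
product. -/
structure ACMS3 (V : Type*) [NormedAddCommGroup V] [InnerProductSpace ℝ V] where
  phi : V →ₗ[ℝ] V
  xi : V
  phiA : Fin 3 → V →ₗ[ℝ] V
  xiA : Fin 3 → V
  xi_unit : ‖xi‖ = 1
  phi_sq : ∀ X : V, phi (phi X) = -X + ⟪xi, X⟫ • xi
  phi_xi : phi xi = 0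
  phi_metric : ∀ X Y : V, ⟪phi X, phi Y⟫ = ⟪X, Y⟫ - ⟪xi, X⟫ * ⟪xi, Y⟫
  xiA_unit : ∀ a, ‖xiA a‖ = 1
  phiA_sq : ∀ a (X : V), phiA a (phiA a X) = -X + ⟪xiA a, X⟫ • xiA a
  phiA_xiA : ∀ a, phiA a (xiA a) = 0
  phiA_metric : ∀ a (X Y : V),
    ⟪phiA a X, phiA a Y⟫ = ⟪X, Y⟫ - ⟪xiA a, X⟫ * ⟪xiA a, Y⟫
  quat1 : ∀ a (X : V), phiA a (phiA (a + 1) X) - ⟪xiA (a + 1), X⟫ • xiA a = phiA (a + 2) X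
  quat2 : ∀ a (X : V),
    phiA (a + 2) X = -(phiA (a + 1) (phiA a X)) + ⟪xiA a, X⟫ • xiA (a + 1)
  quat_xi1 : ∀ a, phiA a (xiA (a + 1)) = xiA (a + 2)
  quat_xi2 : ∀ a, xiA (a + 2) = -(phiA (a + 1) (xiA a))
  rel : ∀ a (X : V), phiA a (phi X) - ⟪xi, X⟫ • xiA a = phi (phiA a X) - ⟪xiA a, X⟫ • xi
  rel_xi : ∀ a, phi (xiA a) = phiA a xi

variable {V : Type*} [NormedAddCommGroup V] [InnerProductSpace ℝ V]

/-- The endomorphism `θ_a X := φ_a φ X − η(X) ξ_a`. -/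
noncomputable def ACMS3.theta (S : ACMS3 V) (a : Fin 3) : V →ₗ[ℝ] V where
  toFun X := S.phiA a (S.phi X) - ⟪S.xi, X⟫ • S.xiA a
  map_add' X Y := by
    simp only [map_add, inner_add_right, add_smul]
    abel
  map_smul' r X := by
    simp only [map_smul, inner_smul_right, RingHom.id_apply, smul_sub, smul_smul]

/-- `H^⊥ = span{ξ, ξ₁, ξ₂, ξ₃, φξ₁, φξ₂, φξ₃}`. -/
noncomputable def ACMS3.Hperp (S : ACMS3 V) : Submodule ℝ V :=
  Submodule.span ℝ {S.xi, S.xiA 0, S.xiA 1, S.xiA 2,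
    S.phi (S.xiA 0), S.phi (S.xiA 1), S.phi (S.xiA 2)}

/-- `H` is the orthogonal complement of `H^⊥` in `V`. -/
noncomputable def ACMS3.H (S : ACMS3 V) : Submodule ℝ V := S.Hperpᗮ

/-- `H_a(ε)`, the eigenspace of `θ_a` restricted to `H` corresponding to the eigenvalue `ε`. -/
noncomputable def ACMS3.eigenH (S : ACMS3 V) (a : Fin 3) (ε : ℝ) : Submodule ℝ V :=
  S.H ⊓ Module.End.eigenspace (S.theta a) ε

/-- The normal Jacobi operator
`R̂_N X = X + 3η(X)ξ + Σ_a (3η_a(X)ξ_a − η(ξ_a)θ_a X + η_a(φX)φξ_a)`. -/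
noncomputable def ACMS3.jacobi (S : ACMS3 V) (X : V) : V :=
  X + (3 * ⟪S.xi, X⟫) • S.xi +
    ∑ a : Fin 3, ((3 * ⟪S.xiA a, X⟫) • S.xiA a
      - ⟪S.xi, S.xiA a⟫ • S.theta a X
      + ⟪S.xiA a, S.phi X⟫ • S.phi (S.xiA a))

namespace ACMS3

variable (S : ACMS3 V)

lemma inner_xi_phi (X : V) : ⟪S.xi, S.phi X⟫ = 0 := by
  have hxx : ⟪S.xi, S.xi⟫ = 1 := by
    rw [real_inner_self_eq_norm_sq, S.xi_unit]; norm_num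
  have h1 : ∀ Y : V, ⟪S.xi, S.phi (S.phi Y)⟫ = 0 := by
    intro Y
    rw [S.phi_sq]
    simp [inner_add_right, real_inner_smul_right, hxx, S.xi_unit]
  have h2 : S.phi (S.phi (S.phi X)) = -(S.phi X) := by
    have := congrArg S.phi (S.phi_sq X)
    simpa [S.phi_xi] using this
  have := h1 (S.phi X)
  rw [h2, inner_neg_right] at this
  linarith

lemma phi_skew (X Y : V) : ⟪S.phi X, Y⟫ = -⟪X, S.phi Y⟫ := by
  have h := S.phi_metric X (S.phi Y)
  rw [S.phi_sq Y] at h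
  have h0 : ⟪S.phi X, S.xi⟫ = 0 := by
    rw [real_inner_comm]; exact S.inner_xi_phi X
  have h1 : ⟪S.xi, S.phi Y⟫ = 0 := S.inner_xi_phi Y
  simp only [inner_add_right, inner_neg_right, real_inner_smul_right, h0, h1,
    mul_zero, add_zero] at h
  linarith

lemma inner_xiA_phiA (a : Fin 3) (X : V) : ⟪S.xiA a, S.phiA a X⟫ = 0 := by
  have hxx : ⟪S.xiA a, S.xiA a⟫ = 1 := by
    rw [real_inner_self_eq_norm_sq, S.xiA_unit]; norm_num
  have h1 : ∀ Y : V, ⟪S.xiA a, S.phiA a (S.phiA a Y)⟫ = 0 := by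
    intro Y
    rw [S.phiA_sq]
    simp [inner_add_right, real_inner_smul_right, hxx, S.xiA_unit]
  have h2 : S.phiA a (S.phiA a (S.phiA a X)) = -(S.phiA a X) := by
    have := congrArg (S.phiA a) (S.phiA_sq a X)
    simpa [S.phiA_xiA] using this
  have := h1 (S.phiA a X)
  rw [h2, inner_neg_right] at this
  linarith

lemma phiA_skew (a : Fin 3) (X Y : V) : ⟪S.phiA a X, Y⟫ = -⟪X, S.phiA a Y⟫ := by
  have h := S.phiA_metric a X (S.phiA a Y)
  rw [S.phiA_sq a Y] at h
  have h0 : ⟪S.phiA a X, S.xiA a⟫ = 0 := by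
    rw [real_inner_comm]; exact S.inner_xiA_phiA a X
  have h1 : ⟪S.xiA a, S.phiA a Y⟫ = 0 := S.inner_xiA_phiA a Y
  simp only [inner_add_right, inner_neg_right, real_inner_smul_right, h0, h1,
    mul_zero, add_zero] at h
  linarith

lemma mem_H_iff (x : V) : x ∈ S.H ↔ ⟪S.xi, x⟫ = 0 ∧ (∀ a, ⟪S.xiA a, x⟫ = 0) ∧
    (∀ a, ⟪S.phi (S.xiA a), x⟫ = 0) := by
  rw [ACMS3.H, Submodule.mem_orthogonal]
  constructor
  · intro hx
    have g : ∀ v ∈ ({S.xi, S.xiA 0, S.xiA 1, S.xiA 2,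
        S.phi (S.xiA 0), S.phi (S.xiA 1), S.phi (S.xiA 2)} : Set V), ⟪v, x⟫ = 0 :=
      fun v hv => hx v (Submodule.subset_span hv)
    refine ⟨g _ (by simp), fun a => ?_, fun a => ?_⟩ <;> fin_cases a <;>
      apply g <;> simp
  · rintro ⟨h1, h2, h3⟩ u hu
    induction hu using Submodule.span_induction with
    | mem v hv =>
      simp only [Set.mem_insert_iff, Set.mem_singleton_iff] at hv
      rcases hv with rfl | rfl | rfl | rfl | rfl | rfl | rfl
      exacts [h1, h2 0, h2 1, h2 2, h3 0, h3 1, h3 2]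
    | zero => simp
    | add u v _ _ hu' hv' => rw [inner_add_left, hu', hv']; ring
    | smul c u _ hu' => rw [real_inner_smul_left, hu']; ring

lemma phi_mem_H {x : V} (hx : x ∈ S.H) : S.phi x ∈ S.H := by
  rw [mem_H_iff] at hx ⊢
  obtain ⟨h1, h2, h3⟩ := hx
  refine ⟨S.inner_xi_phi x, fun a => ?_, fun a => ?_⟩
  · rw [real_inner_comm, S.phi_skew, real_inner_comm]
    simp [h3 a]
  · rw [S.phi_metric, h1, h2 a]; ring

lemma phiA1_xiA0 : S.phiA 1 (S.xiA 0) = -(S.xiA 2) := by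
  have h := S.quat_xi2 0
  rw [(by decide : (0 : Fin 3) + 2 = 2), (by decide : (0 : Fin 3) + 1 = 1)] at h
  rw [h, neg_neg]

lemma phiA1_xiA2 : S.phiA 1 (S.xiA 2) = S.xiA 0 := by
  have h := S.quat_xi1 1
  rwa [(by decide : (1 : Fin 3) + 1 = 2), (by decide : (1 : Fin 3) + 2 = 0)] at h

lemma phiA1_mem_H {x : V} (hx : x ∈ S.H) : S.phiA 1 x ∈ S.H := by
  rw [mem_H_iff] at hx ⊢
  obtain ⟨h1, h2, h3⟩ := hx
  have skew : ∀ v : V, ⟪v, S.phiA 1 x⟫ = -⟪S.phiA 1 v, x⟫ := by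
    intro v
    rw [real_inner_comm, S.phiA_skew, real_inner_comm]
  have hrel : ∀ a : Fin 3, S.phiA 1 (S.phi (S.xiA a)) =
      S.phi (S.phiA 1 (S.xiA a)) - ⟪S.xiA 1, S.xiA a⟫ • S.xi + ⟪S.xi, S.xiA a⟫ • S.xiA 1 := by
    intro a
    have h := S.rel 1 (S.xiA a)
    rw [← h]; abel
  refine ⟨?_, fun a => ?_, fun a => ?_⟩
  · rw [skew, ← S.rel_xi 1]
    simp [h3 1]
  · rw [skew]
    rcases (show a = 0 ∨ a = 1 ∨ a = 2 by omega) with rfl | rfl | rfl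
    · rw [S.phiA1_xiA0]; simp [h2 2]
    · rw [S.phiA_xiA 1]; simp
    · rw [S.phiA1_xiA2]; simp [h2 0]
  · rw [skew, hrel a, inner_add_left, inner_sub_left, real_inner_smul_left,
      real_inner_smul_left, h1, h2 1]
    rcases (show a = 0 ∨ a = 1 ∨ a = 2 by omega) with rfl | rfl | rfl
    · rw [S.phiA1_xiA0]; simp [h3 2]
    · rw [S.phiA_xiA 1]; simp
    · rw [S.phiA1_xiA2]; simp [h3 0]

lemma mem_eigenH_iff (ε : ℝ) (x : V) :
    x ∈ S.eigenH 0 ε ↔ x ∈ S.H ∧ S.theta 0 x = ε • x := by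
  rw [ACMS3.eigenH, Submodule.mem_inf, Module.End.mem_eigenspace_iff]

lemma theta0_apply_of_mem_H {x : V} (hx : x ∈ S.H) :
    S.theta 0 x = S.phiA 0 (S.phi x) := by
  have h1 := ((S.mem_H_iff x).1 hx).1
  show S.phiA 0 (S.phi x) - ⟪S.xi, x⟫ • S.xiA 0 = _
  rw [h1]; simp

lemma phi_mem_eigenH {ε : ℝ} (hε : ε * ε = 1) {x : V} (hx : x ∈ S.eigenH 0 ε) :
    S.phi x ∈ S.eigenH 0 ε := by
  rw [mem_eigenH_iff] at hx ⊢
  obtain ⟨hH, heig⟩ := hx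
  have hpH : S.phi x ∈ S.H := S.phi_mem_H hH
  rw [S.theta0_apply_of_mem_H hH] at heig
  refine ⟨hpH, ?_⟩
  rw [S.theta0_apply_of_mem_H hpH]
  have h1 := ((S.mem_H_iff x).1 hH).1
  have e1 : S.phiA 0 (S.phi (S.phi x)) = -(S.phiA 0 x) := by
    rw [S.phi_sq, h1]; simp
  have h2 : ⟪S.xiA 0, S.phi x⟫ = 0 := ((S.mem_H_iff _).1 hpH).2.1 0
  have e2 : ε • S.phiA 0 x = -(S.phi x) := by
    have h' := congrArg (S.phiA 0) heig
    rw [S.phiA_sq, h2, map_smul] at h'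
    simpa using h'.symm
  have e3 : S.phiA 0 x = ε • (-(S.phi x)) := by
    rw [← e2, smul_smul, hε, one_smul]
  rw [e1, e3]; simp

lemma phiA1_mem_eigenH {ε : ℝ} {x : V} (hx : x ∈ S.eigenH 0 ε) :
    S.phiA 1 x ∈ S.eigenH 0 (-ε) := by
  rw [mem_eigenH_iff] at hx ⊢
  obtain ⟨hH, heig⟩ := hx
  rw [S.theta0_apply_of_mem_H hH] at heig
  have h1H := S.phiA1_mem_H hH
  have hpH := S.phi_mem_H hH
  refine ⟨h1H, ?_⟩
  rw [S.theta0_apply_of_mem_H h1H]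
  obtain ⟨hx1, hx2, _⟩ := (S.mem_H_iff x).1 hH
  have e1 : S.phi (S.phiA 1 x) = S.phiA 1 (S.phi x) := by
    have h' := S.rel 1 x
    rw [hx1, hx2 1] at h'
    simpa using h'.symm
  obtain ⟨_, hp2, _⟩ := (S.mem_H_iff _).1 hpH
  have e2 : S.phiA 0 (S.phiA 1 (S.phi x)) = S.phiA 2 (S.phi x) := by
    have h' := S.quat1 0 (S.phi x)
    rw [(by decide : (0 : Fin 3) + 1 = 1), (by decide : (0 : Fin 3) + 2 = 2),
      hp2 1] at h'
    simpa using h'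
  have e3 : S.phiA 2 (S.phi x) = -(S.phiA 1 (S.phiA 0 (S.phi x))) := by
    have h' := S.quat2 0 (S.phi x)
    rw [(by decide : (0 : Fin 3) + 1 = 1), (by decide : (0 : Fin 3) + 2 = 2),
      hp2 0] at h'
    simpa using h'
  rw [e1, e2, e3, heig, map_smul]
  simp

lemma proj_pt {N : Submodule ℝ V} {w v : V} (hw : w ∈ N) (hwn : ‖w‖ = 1) (hv : v ∈ N)
    (h : ∀ y ∈ N, ⟪y, w⟫ = 0 → ⟪v, y⟫ = 0) : v = ⟪v, w⟫ • w := by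
  have hww : ⟪w, w⟫ = 1 := by rw [real_inner_self_eq_norm_sq, hwn]; norm_num
  have hyN : v - ⟪v, w⟫ • w ∈ N := Submodule.sub_mem N hv (Submodule.smul_mem N _ hw)
  have hyw : ⟪v - ⟪v, w⟫ • w, w⟫ = 0 := by
    rw [inner_sub_left, real_inner_smul_left, hww]; ring
  have h0 : ⟪v, v - ⟪v, w⟫ • w⟫ = 0 := h _ hyN hyw
  have hwy : ⟪w, v - ⟪v, w⟫ • w⟫ = 0 := by rw [real_inner_comm]; exact hyw
  have hyy : ⟪v - ⟪v, w⟫ • w, v - ⟪v, w⟫ • w⟫ = 0 := by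
    rw [inner_sub_left, real_inner_smul_left, h0, hwy]; ring
  exact sub_eq_zero.mp (inner_self_eq_zero.mp hyy)

end ACMS3

lemma finrank_span_pair {u v : V} (huu : ⟪u, u⟫ = 1) (hvv : ⟪v, v⟫ = 1)
    (huv : ⟪u, v⟫ = 0) : Module.finrank ℝ (Submodule.span ℝ {u, v}) = 2 := by
  have hv0 : v ≠ 0 := by
    intro h0
    rw [h0, inner_zero_right] at hvv
    norm_num at hvv
  have hli : LinearIndependent ℝ ![u, v] := by
    rw [linearIndependent_fin2]
    refine ⟨by simpa using hv0, fun a ha => ?_⟩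
    simp only [Matrix.cons_val_one, Matrix.head_cons, Matrix.cons_val_zero] at ha
    have h1 : ⟪u, a • v⟫ = ⟪u, u⟫ := by rw [ha]
    rw [real_inner_smul_right, huv, huu] at h1
    simp at h1
  have hr : Set.range ![u, v] = {u, v} := by
    ext x
    simp only [Set.mem_range, Set.mem_insert_iff, Set.mem_singleton_iff]
    constructor
    · rintro ⟨i, rfl⟩; fin_cases i <;> simp
    · rintro (rfl | rfl)
      exacts [⟨0, rfl⟩, ⟨1, rfl⟩]
  have hcard := finrank_span_eq_card hli
  rw [hr] at hcard
  rw [hcard]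
  simp

/-- Suppose there exist unit vectors `U ∈ H₁(1)` and `W ∈ H₁(−1)` such that for
each `a ∈ {2,3}`, `⟨φ_a Z, Y⟩ = 0` for all `Z ∈ H₁(1)` orthogonal to `U` and all `Y ∈ H₁(−1)`
orthogonal to `W`.  Then `dim H₁(1) = dim H₁(−1) = 2`; more precisely `H₁(1) = span{U, φU}`
and `H₁(−1) = span{W, φW}`. -/
theorem eigenH_dim_two [FiniteDimensional ℝ V] (S : ACMS3 V) (U W : V)
    (hU : U ∈ S.eigenH 0 1) (hUn : ‖U‖ = 1)
    (hW : W ∈ S.eigenH 0 (-1)) (hWn : ‖W‖ = 1)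
    (h : ∀ a : Fin 3, (a = 1 ∨ a = 2) →
      ∀ Z ∈ S.eigenH 0 1, ⟪Z, U⟫ = 0 →
        ∀ Y ∈ S.eigenH 0 (-1), ⟪Y, W⟫ = 0 → ⟪S.phiA a Z, Y⟫ = 0) :
    Module.finrank ℝ (S.eigenH 0 1) = 2 ∧ Module.finrank ℝ (S.eigenH 0 (-1)) = 2 ∧
    S.eigenH 0 1 = Submodule.span ℝ {U, S.phi U} ∧
    S.eigenH 0 (-1) = Submodule.span ℝ {W, S.phi W} := by
  have hUH : U ∈ S.H := ((S.mem_eigenH_iff 1 U).1 hU).1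
  have hWH : W ∈ S.H := ((S.mem_eigenH_iff (-1) W).1 hW).1
  have hxiU : ⟪S.xi, U⟫ = 0 := ((S.mem_H_iff U).1 hUH).1
  have hxiW : ⟪S.xi, W⟫ = 0 := ((S.mem_H_iff W).1 hWH).1
  have hUU : ⟪U, U⟫ = 1 := by rw [real_inner_self_eq_norm_sq, hUn]; norm_num
  have hWW : ⟪W, W⟫ = 1 := by rw [real_inner_self_eq_norm_sq, hWn]; norm_num
  have hpUpU : ⟪S.phi U, S.phi U⟫ = 1 := by
    rw [S.phi_metric, hxiU, hUU]; ring
  have hpWpW : ⟪S.phi W, S.phi W⟫ = 1 := by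
    rw [S.phi_metric, hxiW, hWW]; ring
  have hUpU : ⟪U, S.phi U⟫ = 0 := by
    have h1 := S.phi_skew U U
    have h2 := real_inner_comm (S.phi U) U
    linarith
  have hWpW : ⟪W, S.phi W⟫ = 0 := by
    have h1 := S.phi_skew W W
    have h2 := real_inner_comm (S.phi W) W
    linarith
  have hphiU : S.phi U ∈ S.eigenH 0 1 := S.phi_mem_eigenH (by norm_num) hU
  have hphiW : S.phi W ∈ S.eigenH 0 (-1) := S.phi_mem_eigenH (by norm_num) hW
  -- the relation φ∘φ₂ = φ₂∘φ on H
  have relH : ∀ x : V, x ∈ S.H → S.phi (S.phiA 1 x) = S.phiA 1 (S.phi x) := by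
    intro x hx
    obtain ⟨hx1, hx2, _⟩ := (S.mem_H_iff x).1 hx
    have h' := S.rel 1 x
    rw [hx1, hx2 1] at h'
    simpa using h'.symm
  -- key kernel lemma for H₁(1)
  have keyP : ∀ Z, Z ∈ S.eigenH 0 1 → ⟪Z, U⟫ = 0 → ⟪Z, S.phi U⟫ = 0 → Z = 0 := by
    intro Z hZ hZU hZpU
    have hZH : Z ∈ S.H := ((S.mem_eigenH_iff 1 Z).1 hZ).1
    obtain ⟨hZ1, hZ2, _⟩ := (S.mem_H_iff Z).1 hZH
    have hpZ : S.phi Z ∈ S.eigenH 0 1 := S.phi_mem_eigenH (by norm_num) hZ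
    have hpZU : ⟪S.phi Z, U⟫ = 0 := by
      rw [S.phi_skew, hZpU, neg_zero]
    have h2Z : S.phiA 1 Z ∈ S.eigenH 0 (-1) := S.phiA1_mem_eigenH hZ
    have h2pZ : S.phiA 1 (S.phi Z) ∈ S.eigenH 0 (-1) := S.phiA1_mem_eigenH hpZ
    have hZc : S.phiA 1 Z = ⟪S.phiA 1 Z, W⟫ • W :=
      ACMS3.proj_pt hW hWn h2Z (fun Y hY hYW => h 1 (Or.inl rfl) Z hZ hZU Y hY hYW)
    have hpZc : S.phiA 1 (S.phi Z) = ⟪S.phiA 1 (S.phi Z), W⟫ • W :=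
      ACMS3.proj_pt hW hWn h2pZ
        (fun Y hY hYW => h 1 (Or.inl rfl) (S.phi Z) hpZ hpZU Y hY hYW)
    have e2 : ⟪S.phiA 1 Z, W⟫ • S.phi W = ⟪S.phiA 1 (S.phi Z), W⟫ • W := by
      rw [← map_smul, ← hZc, relH Z hZH]; exact hpZc
    have e3 : ⟪S.phiA 1 Z, W⟫ = 0 := by
      have h' := congrArg (fun v => ⟪v, S.phi W⟫) e2
      simp only [real_inner_smul_left, hpWpW, hWpW, mul_one, mul_zero] at h'
      exact h'
    have e4 : S.phiA 1 Z = 0 := by rw [hZc, e3, zero_smul]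
    have e5 : ⟪Z, Z⟫ = 0 := by
      have h' := S.phiA_metric 1 Z Z
      rw [e4, hZ2 1, inner_zero_left] at h'
      linarith [h'.symm]
    exact inner_self_eq_zero.mp e5
  -- key kernel lemma for H₁(−1)
  have keyN : ∀ Y, Y ∈ S.eigenH 0 (-1) → ⟪Y, W⟫ = 0 → ⟪Y, S.phi W⟫ = 0 → Y = 0 := by
    intro Y hY hYW hYpW
    have hYH : Y ∈ S.H := ((S.mem_eigenH_iff (-1) Y).1 hY).1
    obtain ⟨hY1, hY2, _⟩ := (S.mem_H_iff Y).1 hYH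
    have hpY : S.phi Y ∈ S.eigenH 0 (-1) := S.phi_mem_eigenH (by norm_num) hY
    have hpYW : ⟪S.phi Y, W⟫ = 0 := by
      rw [S.phi_skew, hYpW, neg_zero]
    have h2Y : S.phiA 1 Y ∈ S.eigenH 0 1 := by
      have := S.phiA1_mem_eigenH hY
      simpa using this
    have h2pY : S.phiA 1 (S.phi Y) ∈ S.eigenH 0 1 := by
      have := S.phiA1_mem_eigenH hpY
      simpa using this
    have horth : ∀ v : V, v ∈ S.eigenH 0 (-1) → ⟪v, W⟫ = 0 →
        ∀ Z ∈ S.eigenH 0 1, ⟪Z, U⟫ = 0 → ⟪S.phiA 1 v, Z⟫ = 0 := by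
      intro v hv hvW Z hZ hZU
      have h' := h 1 (Or.inl rfl) Z hZ hZU v hv hvW
      rw [S.phiA_skew, real_inner_comm, h', neg_zero]
    have hYc : S.phiA 1 Y = ⟪S.phiA 1 Y, U⟫ • U :=
      ACMS3.proj_pt hU hUn h2Y (fun Z hZ hZU => horth Y hY hYW Z hZ hZU)
    have hpYc : S.phiA 1 (S.phi Y) = ⟪S.phiA 1 (S.phi Y), U⟫ • U :=
      ACMS3.proj_pt hU hUn h2pY (fun Z hZ hZU => horth (S.phi Y) hpY hpYW Z hZ hZU)
    have e2 : ⟪S.phiA 1 Y, U⟫ • S.phi U = ⟪S.phiA 1 (S.phi Y), U⟫ • U := by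
      rw [← map_smul, ← hYc, relH Y hYH]; exact hpYc
    have e3 : ⟪S.phiA 1 Y, U⟫ = 0 := by
      have h' := congrArg (fun v => ⟪v, S.phi U⟫) e2
      simp only [real_inner_smul_left, hpUpU, hUpU, mul_one, mul_zero] at h'
      exact h'
    have e4 : S.phiA 1 Y = 0 := by rw [hYc, e3, zero_smul]
    have e5 : ⟪Y, Y⟫ = 0 := by
      have h' := S.phiA_metric 1 Y Y
      rw [e4, hY2 1, inner_zero_left] at h'
      linarith [h'.symm]
    exact inner_self_eq_zero.mp e5
  -- span characterizations
  have spanP : S.eigenH 0 1 = Submodule.span ℝ {U, S.phi U} := by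
    apply le_antisymm
    · intro Z hZ
      have hmem : Z - ⟪Z, U⟫ • U - ⟪Z, S.phi U⟫ • S.phi U ∈ S.eigenH 0 1 :=
        Submodule.sub_mem _ (Submodule.sub_mem _ hZ (Submodule.smul_mem _ _ hU))
          (Submodule.smul_mem _ _ hphiU)
      have hpUU : ⟪S.phi U, U⟫ = 0 := by rw [real_inner_comm]; exact hUpU
      have ho1 : ⟪Z - ⟪Z, U⟫ • U - ⟪Z, S.phi U⟫ • S.phi U, U⟫ = 0 := by
        rw [inner_sub_left, inner_sub_left, real_inner_smul_left, real_inner_smul_left,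
          hUU, hpUU]
        ring
      have ho2 : ⟪Z - ⟪Z, U⟫ • U - ⟪Z, S.phi U⟫ • S.phi U, S.phi U⟫ = 0 := by
        rw [inner_sub_left, inner_sub_left, real_inner_smul_left, real_inner_smul_left,
          hpUpU, hUpU]
        ring
      have hz0 := keyP _ hmem ho1 ho2
      have hrepr : Z = ⟪Z, U⟫ • U + ⟪Z, S.phi U⟫ • S.phi U := by
        rw [sub_sub, sub_eq_zero] at hz0
        exact hz0
      rw [hrepr]
      exact Submodule.add_mem _
        (Submodule.smul_mem _ _ (Submodule.subset_span (by simp)))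
        (Submodule.smul_mem _ _ (Submodule.subset_span (by simp)))
    · rw [Submodule.span_le]
      rintro v hv
      simp only [Set.mem_insert_iff, Set.mem_singleton_iff] at hv
      rcases hv with rfl | rfl
      exacts [hU, hphiU]
  have spanN : S.eigenH 0 (-1) = Submodule.span ℝ {W, S.phi W} := by
    apply le_antisymm
    · intro Y hY
      have hmem : Y - ⟪Y, W⟫ • W - ⟪Y, S.phi W⟫ • S.phi W ∈ S.eigenH 0 (-1) :=
        Submodule.sub_mem _ (Submodule.sub_mem _ hY (Submodule.smul_mem _ _ hW))
          (Submodule.smul_mem _ _ hphiW)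
      have hpWW : ⟪S.phi W, W⟫ = 0 := by rw [real_inner_comm]; exact hWpW
      have ho1 : ⟪Y - ⟪Y, W⟫ • W - ⟪Y, S.phi W⟫ • S.phi W, W⟫ = 0 := by
        rw [inner_sub_left, inner_sub_left, real_inner_smul_left, real_inner_smul_left,
          hWW, hpWW]
        ring
      have ho2 : ⟪Y - ⟪Y, W⟫ • W - ⟪Y, S.phi W⟫ • S.phi W, S.phi W⟫ = 0 := by
        rw [inner_sub_left, inner_sub_left, real_inner_smul_left, real_inner_smul_left,
          hpWpW, hWpW]
        ring
      have hy0 := keyN _ hmem ho1 ho2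
      have hrepr : Y = ⟪Y, W⟫ • W + ⟪Y, S.phi W⟫ • S.phi W := by
        rw [sub_sub, sub_eq_zero] at hy0
        exact hy0
      rw [hrepr]
      exact Submodule.add_mem _
        (Submodule.smul_mem _ _ (Submodule.subset_span (by simp)))
        (Submodule.smul_mem _ _ (Submodule.subset_span (by simp)))
    · rw [Submodule.span_le]
      rintro v hv
      simp only [Set.mem_insert_iff, Set.mem_singleton_iff] at hv
      rcases hv with rfl | rfl
      exacts [hW, hphiW]
  refine ⟨?_, ?_, spanP, spanN⟩
  · rw [spanP]
    exact finrank_span_pair hUU hpUpU hUpU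
  · rw [spanN]
    exact finrank_span_pair hWW hpWpW hWpW
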